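/- Let C be a code of length n over a finite alphabet Q of size q ≥ 2 with |C| ≥ q^k for some integer k ≥ 1, such that any two distinct codewords are at Hamming distance at least d, and suppose C is r-locally recoverable with 1 ≤ r ≤ k. Then d ≤ n − k − ⌈k/r⌉ + 2. -/

import Mathlib

set_option linter.unusedSectionVars false

variable {n : ℕ} {Q : Type} [Fintype Q] [DecidableEq Q]

private def mask (c : Q) (S : Finset (Fin n)) (X : Fin n → Q) : Fin n → Q :=
  fun i => if i ∈ S then X i else c

private lemma mask_mask (c : Q) {S T : Finset (Fin n)} (h : S ⊆ T) (X : Fin n → Q) :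
    mask c S (mask c T X) = mask c S X := by
  funext j
  simp only [mask]
  by_cases hj : j ∈ S
  · simp [hj, h hj]
  · simp [hj]

private def AS (c : Q) (C : Finset (Fin n → Q)) (S : Finset (Fin n)) : ℕ :=
  (C.image (mask c S)).card

private lemma AS_insert_le (c : Q) (C : Finset (Fin n → Q)) (S : Finset (Fin n)) (i : Fin n) :
    AS c C (insert i S) ≤ AS c C S * Fintype.card Q := by
  classical
  have hcard : AS c C S * Fintype.card Q
      = ((C.image (mask c S)) ×ˢ (Finset.univ : Finset Q)).card := by
    simp [AS, Finset.card_product]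
  rw [AS, hcard]
  apply Finset.card_le_card_of_injOn (fun Z => (mask c S Z, Z i))
  · intro Z hZ
    obtain ⟨X, hX, rfl⟩ := Finset.mem_image.mp hZ
    simp only [Finset.mem_coe, Finset.mem_product]
    refine ⟨?_, Finset.mem_univ _⟩
    rw [mask_mask c (Finset.subset_insert i S)]
    exact Finset.mem_image_of_mem _ hX
  · intro Z hZ Z' hZ' h
    obtain ⟨X, hX, rfl⟩ := Finset.mem_image.mp hZ
    obtain ⟨X', hX', rfl⟩ := Finset.mem_image.mp hZ'
    simp only [Prod.mk.injEq] at h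
    obtain ⟨h1, h2⟩ := h
    rw [mask_mask c (Finset.subset_insert i S), mask_mask c (Finset.subset_insert i S)] at h1
    funext j
    by_cases hji : j = i
    · subst hji; exact h2
    · by_cases hj : j ∈ S
      · have := congrFun h1 j
        simpa [mask, hj, Finset.mem_insert, hji] using this
      · simp [mask, Finset.mem_insert, hji, hj]

private lemma AS_insert_le_of_det (c : Q) (C : Finset (Fin n → Q)) (S : Finset (Fin n)) (i : Fin n)
    (hdet : ∀ X ∈ C, ∀ Y ∈ C, mask c S X = mask c S Y → X i = Y i) :
    AS c C (insert i S) ≤ AS c C S := by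
  apply Finset.card_le_card_of_injOn (mask c S)
  · intro Z hZ
    obtain ⟨X, hX, rfl⟩ := Finset.mem_image.mp hZ
    rw [mask_mask c (Finset.subset_insert i S)]
    exact Finset.mem_image_of_mem _ hX
  · intro Z hZ Z' hZ' h
    obtain ⟨X, hX, rfl⟩ := Finset.mem_image.mp hZ
    obtain ⟨X', hX', rfl⟩ := Finset.mem_image.mp hZ'
    rw [mask_mask c (Finset.subset_insert i S), mask_mask c (Finset.subset_insert i S)] at h
    have hi : X i = X' i := hdet X hX X' hX' h
    funext j
    by_cases hji : j = i
    · subst hji; simp [mask, hi]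
    · by_cases hj : j ∈ S
      · have := congrFun h j
        simpa [mask, hj, Finset.mem_insert, hji] using this
      · simp [mask, Finset.mem_insert, hji, hj]

private lemma AS_union_le (c : Q) (C : Finset (Fin n → Q)) (S T : Finset (Fin n)) :
    AS c C (S ∪ T) ≤ AS c C S * Fintype.card Q ^ (T \ S).card := by
  classical
  induction T using Finset.induction_on with
  | empty => simp
  | @insert a T ha ih =>
    by_cases haS : a ∈ S
    · have h1 : S ∪ insert a T = S ∪ T := by
        ext x; simp only [Finset.mem_union, Finset.mem_insert]
        constructor
        · rintro (h | rfl | h) <;> first | exact Or.inl h | exact Or.inl haS | exact Or.inr h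
        · rintro (h | h) <;> first | exact Or.inl h | exact Or.inr (Or.inr h)
      have h2 : insert a T \ S = T \ S := by
        ext x; simp only [Finset.mem_sdiff, Finset.mem_insert]
        constructor
        · rintro ⟨rfl | h, hx⟩
          · exact absurd haS hx
          · exact ⟨h, hx⟩
        · rintro ⟨h, hx⟩; exact ⟨Or.inr h, hx⟩
      rw [h1, h2]; exact ih
    · have h1 : S ∪ insert a T = insert a (S ∪ T) := by
        ext x
        simp only [Finset.mem_union, Finset.mem_insert]
        tauto
      have h2 : (insert a T \ S).card = (T \ S).card + 1 := by
        rw [Finset.insert_sdiff_of_notMem _ haS,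
          Finset.card_insert_of_notMem (by simp [ha])]
      rw [h1, h2, pow_succ, ← mul_assoc]
      calc AS c C (insert a (S ∪ T)) ≤ AS c C (S ∪ T) * Fintype.card Q :=
            AS_insert_le c C _ a
        _ ≤ AS c C S * Fintype.card Q ^ (T \ S).card * Fintype.card Q :=
            Nat.mul_le_mul_right _ ih

private lemma AS_univ (c : Q) (C : Finset (Fin n → Q)) :
    AS c C Finset.univ = C.card := by
  have : mask c (Finset.univ : Finset (Fin n)) = id := by
    funext X j; simp [mask]
  rw [AS, this, Finset.image_id]

private lemma AS_empty_le (c : Q) (C : Finset (Fin n → Q)) :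
    AS c C ∅ ≤ 1 := by
  apply Finset.card_le_one.mpr
  intro x hx y hy
  obtain ⟨X, _, rfl⟩ := Finset.mem_image.mp hx
  obtain ⟨Y, _, rfl⟩ := Finset.mem_image.mp hy
  funext j; simp [mask]

/-- The Gopalan et al. generalized Singleton bound: a code with
`|C| ≥ q^k` codewords (`q ≥ 2`, `1 ≤ k`), minimum distance `d`, and locality
`1 ≤ r ≤ k` satisfies `d ≤ n - k - ⌈k/r⌉ + 2`. -/
theorem stmt_3 (n q d r k : ℕ) (hq : 2 ≤ q) (hk : 1 ≤ k) (hr : 1 ≤ r) (hrk : r ≤ k)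
    (Q : Type) [Fintype Q] [DecidableEq Q] (hcard : Fintype.card Q = q)
    (C : Finset (Fin n → Q)) (hCcard : q ^ k ≤ C.card)
    (hdist : ∀ X ∈ C, ∀ Y ∈ C, X ≠ Y → d ≤ hammingDist X Y)
    (hloc : ∀ i : Fin n, ∃ R : Finset (Fin n), i ∉ R ∧ R.card = r ∧
      ∀ X ∈ C, ∀ Y ∈ C, X i ≠ Y i → ∃ j ∈ R, X j ≠ Y j) :
    (d : ℤ) ≤ (n : ℤ) - (k : ℤ) - ⌈(k : ℚ) / (r : ℚ)⌉ + 2 := by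
  classical
  subst hcard
  set q := Fintype.card Q with hq'
  have hQne : Nonempty Q := Fintype.card_pos_iff.mp (by omega)
  obtain ⟨c⟩ := hQne
  set t := (k - 1) / r with ht
  -- basic arithmetic facts about t
  have htr : t * r ≤ k - 1 := Nat.div_mul_le_self (k - 1) r
  have htr2 : k ≤ (t + 1) * r := by
    have h1 := Nat.div_add_mod (k - 1) r
    have h2 : (k - 1) % r < r := Nat.mod_lt _ (by omega)
    have h3 : (t + 1) * r = t * r + r := by ring
    have h4 : t * r = r * ((k - 1) / r) := by rw [ht, Nat.mul_comm]
    omega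
  -- the ceiling equals t + 1
  have hceil : ⌈(k : ℚ) / (r : ℚ)⌉ = (t : ℤ) + 1 := by
    rw [Int.ceil_eq_iff]
    have hrQ : (0 : ℚ) < (r : ℚ) := by exact_mod_cast hr
    constructor
    · have h : (t : ℚ) * r < k := by exact_mod_cast (show t * r < k by omega)
      rw [lt_div_iff₀ hrQ]
      push_cast
      linarith
    · have h : (k : ℚ) ≤ ((t : ℚ) + 1) * r := by exact_mod_cast htr2
      rw [div_le_iff₀ hrQ]
      push_cast
      linarith
  -- greedy construction
  have greedy : ∀ j, j ≤ t → ∃ S : Finset (Fin n),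
      S.card ≤ j * (r + 1) ∧ AS c C S * q ^ j ≤ q ^ S.card := by
    intro j
    induction j with
    | zero =>
      intro _
      exact ⟨∅, by simp, by simpa using AS_empty_le c C⟩
    | succ j ih =>
      intro hj
      obtain ⟨S, hS1, hS2⟩ := ih (by omega)
      -- S is not all of Fin n
      have hSne : S ≠ Finset.univ := by
        intro hSu
        have hAu : AS c C S = C.card := by rw [hSu]; exact AS_univ c C
        have hSn : S.card = n := by rw [hSu, Finset.card_univ, Fintype.card_fin]
        have h1 : q ^ k * q ^ j ≤ q ^ n := by
          calc q ^ k * q ^ j ≤ C.card * q ^ j := Nat.mul_le_mul_right _ hCcard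
            _ = AS c C S * q ^ j := by rw [hAu]
            _ ≤ q ^ S.card := hS2
            _ = q ^ n := by rw [hSn]
        rw [← pow_add] at h1
        have hkn : k + j ≤ n := (Nat.pow_le_pow_iff_right (by omega)).mp h1
        have hn' : n ≤ j * (r + 1) := hSn ▸ hS1
        have : j * r ≤ (t - 1) * r := Nat.mul_le_mul_right r (by omega)
        have h4 : (t - 1) * r = t * r - r := by rw [Nat.sub_one_mul]
        have h5 : r ≤ t * r := Nat.le_mul_of_pos_left r (by
          have : 1 ≤ t := by
            rcases Nat.eq_zero_or_pos t with h | h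
            · omega
            · exact h
          omega)
        have h6 : j * (r + 1) = j * r + j := by ring
        omega
      have : ∃ i : Fin n, i ∉ S := by
        by_contra h
        push_neg at h
        exact hSne (Finset.eq_univ_iff_forall.mpr h)
      obtain ⟨i, hiS⟩ := this
      obtain ⟨R, hiR, hRcard, hRprop⟩ := hloc i
      refine ⟨insert i (S ∪ R), ?_, ?_⟩
      · have h1 : (insert i (S ∪ R)).card ≤ (S ∪ R).card + 1 := Finset.card_insert_le _ _
        have h2 : (S ∪ R).card ≤ S.card + R.card := Finset.card_union_le _ _
        have : (j + 1) * (r + 1) = j * (r + 1) + (r + 1) := by ring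
        omega
      · have hdet : ∀ X ∈ C, ∀ Y ∈ C, mask c (S ∪ R) X = mask c (S ∪ R) Y → X i = Y i := by
          intro X hX Y hY h
          by_contra hne
          obtain ⟨j', hj'R, hj'ne⟩ := hRprop X hX Y hY hne
          apply hj'ne
          have := congrFun h j'
          simpa [mask, Finset.mem_union, hj'R] using this
        have h1 : AS c C (insert i (S ∪ R)) ≤ AS c C (S ∪ R) :=
          AS_insert_le_of_det c C (S ∪ R) i hdet
        have h2 : AS c C (S ∪ R) ≤ AS c C S * q ^ (R \ S).card := AS_union_le c C S R
        have hicard : (insert i (S ∪ R)).card = S.card + (R \ S).card + 1 := by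
          rw [Finset.card_insert_of_notMem (by simp [hiS, hiR])]
          have : (R \ S).card + S.card = (R ∪ S).card := Finset.card_sdiff_add_card R S
          rw [Finset.union_comm S R]
          omega
        calc AS c C (insert i (S ∪ R)) * q ^ (j + 1)
            ≤ (AS c C S * q ^ (R \ S).card) * q ^ (j + 1) :=
              Nat.mul_le_mul_right _ (le_trans h1 h2)
          _ = (AS c C S * q ^ j) * q ^ ((R \ S).card + 1) := by ring
          _ ≤ q ^ S.card * q ^ ((R \ S).card + 1) := Nat.mul_le_mul_right _ hS2
          _ = q ^ (insert i (S ∪ R)).card := by rw [← pow_add, hicard]; ring_nf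
  obtain ⟨S₀, hS01, hS02⟩ := greedy t le_rfl
  have hqpos : 0 < q := by omega
  have hS0n : S₀.card ≤ n := by
    have := Finset.card_le_univ S₀
    simpa [Fintype.card_fin] using this
  -- n is large enough: k + t ≤ n
  have hn : k + t ≤ n := by
    have h1 : AS c C Finset.univ ≤ AS c C S₀ * q ^ ((Finset.univ : Finset (Fin n)) \ S₀).card := by
      have h := AS_union_le c C S₀ Finset.univ
      rwa [Finset.union_eq_right.mpr (Finset.subset_univ _), ← hq'] at h
    have h2 : ((Finset.univ : Finset (Fin n)) \ S₀).card = n - S₀.card := by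
      rw [Finset.card_sdiff_of_subset (Finset.subset_univ _), Finset.card_univ, Fintype.card_fin]
    rw [AS_univ, h2] at h1
    have h3 : q ^ k * q ^ t ≤ q ^ n := by
      calc q ^ k * q ^ t ≤ C.card * q ^ t := Nat.mul_le_mul_right _ hCcard
        _ ≤ (AS c C S₀ * q ^ (n - S₀.card)) * q ^ t := Nat.mul_le_mul_right _ h1
        _ = (AS c C S₀ * q ^ t) * q ^ (n - S₀.card) := by ring
        _ ≤ q ^ S₀.card * q ^ (n - S₀.card) := Nat.mul_le_mul_right _ hS02
        _ = q ^ n := by rw [← pow_add]; congr 1; omega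
    rw [← pow_add] at h3
    exact (Nat.pow_le_pow_iff_right (by omega)).mp h3
  -- pad S₀ to a set S of size k - 1 + t
  have hS0m : S₀.card ≤ k - 1 + t := by
    have : t * (r + 1) = t * r + t := by ring
    omega
  obtain ⟨S, hsub, hScard⟩ := Finset.exists_superset_card_eq hS0m
    (by rw [Fintype.card_fin]; omega)
  have hAS : AS c C S * q ^ t ≤ q ^ (k - 1 + t) := by
    have h1 : AS c C S ≤ AS c C S₀ * q ^ (S \ S₀).card := by
      have := AS_union_le c C S₀ S
      rwa [Finset.union_eq_right.mpr hsub] at this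
    have h2 : (S \ S₀).card = (k - 1 + t) - S₀.card := by
      rw [Finset.card_sdiff_of_subset hsub, hScard]
    calc AS c C S * q ^ t ≤ (AS c C S₀ * q ^ (S \ S₀).card) * q ^ t :=
          Nat.mul_le_mul_right _ h1
      _ = (AS c C S₀ * q ^ t) * q ^ (S \ S₀).card := by ring
      _ ≤ q ^ S₀.card * q ^ (S \ S₀).card := Nat.mul_le_mul_right _ hS02
      _ = q ^ (k - 1 + t) := by rw [← pow_add, h2]; congr 1; omega
  have hASlt : AS c C S < C.card := by
    have h1 : AS c C S ≤ q ^ (k - 1) := by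
      have : AS c C S * q ^ t ≤ q ^ (k - 1) * q ^ t := by
        rw [← pow_add]
        exact hAS
      exact Nat.le_of_mul_le_mul_right this (Nat.pow_pos hqpos)
    have h2 : q ^ (k - 1) < q ^ k := Nat.pow_lt_pow_right (by omega) (by omega)
    omega
  -- two distinct codewords agreeing on S
  obtain ⟨X, hX, Y, hY, hXY, hmask⟩ :=
    Finset.exists_ne_map_eq_of_card_lt_of_maps_to (t := C.image (mask c S)) hASlt
      (fun a ha => Finset.mem_image_of_mem _ ha)
  have hagree : ∀ j ∈ S, X j = Y j := by
    intro j hj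
    have := congrFun hmask j
    simpa [mask, hj] using this
  have hdXY : d ≤ hammingDist X Y := hdist X hX Y hY hXY
  have hdist2 : hammingDist X Y ≤ n - S.card := by
    have h1 : (Finset.univ.filter fun i => X i ≠ Y i) ⊆ Sᶜ := by
      intro j hj
      simp only [Finset.mem_filter, Finset.mem_univ, true_and] at hj
      simp only [Finset.mem_compl]
      intro hjS
      exact hj (hagree j hjS)
    have h2 : hammingDist X Y = (Finset.univ.filter fun i => X i ≠ Y i).card := rfl
    rw [h2]
    calc (Finset.univ.filter fun i => X i ≠ Y i).card ≤ Sᶜ.card := Finset.card_le_card h1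
      _ = n - S.card := by rw [Finset.card_compl, Fintype.card_fin]
  rw [hceil]
  have hd : d ≤ n - (k - 1 + t) := by rw [← hScard]; omega
  have hScn : k - 1 + t ≤ n := by omega
  omega
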